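/- Let ξ⋆ ∈ L²_ν(Ω;V), and set w = ∫₀^ℓ (∫_τ^ℓ e^{τ−s} ξ⋆(s) ds) dτ. Then w ∈ V and ‖w‖_V ≤ √(M(0)) · ‖ξ⋆‖_{L²_ν(Ω;V)}. -/

import Mathlib

open MeasureTheory Set Filter
open scoped ENNReal NNReal

/-- For `ξ⋆ ∈ L²_ν(Ω;V)`, the vector
`w = ∫₀^ℓ (∫_τ^ℓ e^{τ−s} ξ⋆(s) ds) dτ` is well defined in `V`
(the outer integrand is Bochner integrable on `Ω`) and
`‖w‖ ≤ √(M(0)) ‖ξ⋆‖_{L²_ν(Ω;V)}`. -/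
theorem stmt8
    {V : Type*} [NormedAddCommGroup V] [InnerProductSpace ℝ V] [CompleteSpace V]
    (ℓ : EReal) (hℓ : 0 < ℓ)
    (Ω : Set ℝ) (hΩ : Ω = {s : ℝ | 0 < s ∧ (s : EReal) < ℓ})
    (μ : ℝ → ℝ)
    (hμpos : ∀ s ∈ Ω, 0 < μ s)
    (hμmono : AntitoneOn μ Ω)
    (hμint : IntegrableOn μ Ω)
    (ξs : ℝ → V)
    (hξsmeas : AEStronglyMeasurable ξs (volume.restrict Ω))
    (hξsL2 : IntegrableOn (fun s => (μ s)⁻¹ * ‖ξs s‖ ^ 2) Ω) :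
    IntegrableOn (fun τ => ∫ s in Ω ∩ Ioi τ, Real.exp (τ - s) • ξs s) Ω ∧
      ‖∫ τ in Ω, ∫ s in Ω ∩ Ioi τ, Real.exp (τ - s) • ξs s‖ ≤
        Real.sqrt (∫ σ in Ω, μ σ) *
          Real.sqrt (∫ s in Ω, (μ s)⁻¹ * ‖ξs s‖ ^ 2) := by
  have hΩmeas : MeasurableSet Ω := by
    rw [hΩ]
    have : {s : ℝ | 0 < s ∧ (s : EReal) < ℓ}
        = Ioi 0 ∩ ((↑) : ℝ → EReal) ⁻¹' (Iio ℓ) := rfl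
    rw [this]
    exact measurableSet_Ioi.inter (measurable_coe_real_ereal measurableSet_Iio)
  obtain ⟨ξ, hξm, hξae⟩ := hξsmeas
  -- norms agree a.e.
  have hμaesm : AEStronglyMeasurable μ (volume.restrict Ω) := hμint.aestronglyMeasurable
  -- integrability of ‖ξ‖ on Ω
  have hbound_int : IntegrableOn (fun s => (μ s + (μ s)⁻¹ * ‖ξs s‖ ^ 2) / 2) Ω :=
    (hμint.add hξsL2).div_const 2
  have hξnorm_int : IntegrableOn (fun s => ‖ξ s‖) Ω := by
    refine hbound_int.mono' hξm.norm.aestronglyMeasurable ?_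
    filter_upwards [hξae, ae_restrict_mem hΩmeas] with s hs hsΩ
    rw [norm_norm, ← hs]
    have hμ : 0 < μ s := hμpos s hsΩ
    have h1 : μ s * (μ s)⁻¹ = 1 := mul_inv_cancel₀ hμ.ne'
    nlinarith [sq_nonneg (μ s - ‖ξs s‖), norm_nonneg (ξs s), hμ,
      sq_nonneg (‖ξs s‖), mul_pos hμ hμ]
  -- Cauchy-Schwarz
  have hCS : ∫ s in Ω, ‖ξ s‖ ≤ Real.sqrt (∫ σ in Ω, μ σ) *
      Real.sqrt (∫ s in Ω, (μ s)⁻¹ * ‖ξs s‖ ^ 2) := by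
    set f : ℝ → ℝ := fun s => Real.sqrt (μ s) with hfdef
    set g : ℝ → ℝ := fun s => Real.sqrt ((μ s)⁻¹) * ‖ξ s‖ with hgdef
    have hfm : AEStronglyMeasurable f (volume.restrict Ω) :=
      Real.continuous_sqrt.comp_aestronglyMeasurable hμaesm
    have hgm : AEStronglyMeasurable g (volume.restrict Ω) :=
      ((Measurable.comp_aemeasurable Real.continuous_sqrt.measurable
        hμint.aemeasurable.inv).aestronglyMeasurable).mul
        hξm.norm.aestronglyMeasurable
    have hf2 : (fun s => f s ^ (2:ℝ)) =ᵐ[volume.restrict Ω] μ := by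
      filter_upwards [ae_restrict_mem hΩmeas] with s hs
      simp only [hfdef, Real.rpow_two]
      exact Real.sq_sqrt (hμpos s hs).le
    have hg2 : (fun s => g s ^ (2:ℝ)) =ᵐ[volume.restrict Ω]
        (fun s => (μ s)⁻¹ * ‖ξs s‖ ^ 2) := by
      filter_upwards [ae_restrict_mem hΩmeas, hξae] with s hs hse
      simp only [hgdef, Real.rpow_two, mul_pow, hse]
      rw [Real.sq_sqrt (inv_nonneg.mpr (hμpos s hs).le)]
    have hfg : (fun s => f s * g s) =ᵐ[volume.restrict Ω] (fun s => ‖ξ s‖) := by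
      filter_upwards [ae_restrict_mem hΩmeas] with s hs
      have hμs : 0 < μ s := hμpos s hs
      simp only [hfdef, hgdef]
      rw [← mul_assoc, ← Real.sqrt_mul hμs.le, mul_inv_cancel₀ hμs.ne',
        Real.sqrt_one, one_mul]
    have hfL : MemLp f (ENNReal.ofReal 2) (volume.restrict Ω) := by
      rw [show ENNReal.ofReal 2 = 2 by norm_num]
      refine (memLp_two_iff_integrable_sq hfm).2 ?_
      refine (integrable_congr ?_).2 hμint
      filter_upwards [hf2] with s hs
      rw [← hs, Real.rpow_two]
    have hgL : MemLp g (ENNReal.ofReal 2) (volume.restrict Ω) := by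
      rw [show ENNReal.ofReal 2 = 2 by norm_num]
      refine (memLp_two_iff_integrable_sq hgm).2 ?_
      refine (integrable_congr ?_).2 hξsL2
      filter_upwards [hg2] with s hs
      rw [← hs, Real.rpow_two]
    have hp : Real.HolderConjugate 2 2 := Real.HolderConjugate.two_two
    calc ∫ s in Ω, ‖ξ s‖ = ∫ s in Ω, f s * g s := (integral_congr_ae hfg).symm
      _ ≤ (∫ s in Ω, f s ^ (2:ℝ)) ^ (1/(2:ℝ)) * (∫ s in Ω, g s ^ (2:ℝ)) ^ (1/(2:ℝ)) :=
          integral_mul_le_Lp_mul_Lq_of_nonneg hp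
            (Eventually.of_forall fun s => Real.sqrt_nonneg _)
            (Eventually.of_forall fun s => mul_nonneg (Real.sqrt_nonneg _) (norm_nonneg _))
            hfL hgL
      _ = _ := by
          rw [integral_congr_ae hf2, integral_congr_ae hg2,
            Real.sqrt_eq_rpow, Real.sqrt_eq_rpow]
  -- product-space machinery
  set E : Set (ℝ × ℝ) := {p : ℝ × ℝ | p.1 < p.2} ∩ Prod.snd ⁻¹' Ω with hE
  have hEmeas : MeasurableSet E :=
    (measurableSet_lt measurable_fst measurable_snd).inter (hΩmeas.preimage measurable_snd)
  set G : ℝ × ℝ → V := E.indicator (fun p => Real.exp (p.1 - p.2) • ξ p.2) with hG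
  have hGsm : StronglyMeasurable G :=
    (((Real.continuous_exp.measurable.comp
        (measurable_fst.sub measurable_snd)).stronglyMeasurable).smul
      (hξm.comp_measurable measurable_snd)).indicator hEmeas
  set g : ℝ → V := fun τ => ∫ s in Ω ∩ Ioi τ, Real.exp (τ - s) • ξ s with hgdef2
  have hg_eq : ∀ τ, g τ = ∫ s, G (τ, s) := by
    intro τ
    have h1 : (fun s => G (τ, s))
        = fun s => (Ω ∩ Ioi τ).indicator (fun s => Real.exp (τ - s) • ξ s) s := by
      funext s
      by_cases hmem : s ∈ Ω ∩ Ioi τ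
      · have hEmem : (τ, s) ∈ E := ⟨hmem.2, hmem.1⟩
        show E.indicator _ (τ, s) = _
        rw [Set.indicator_of_mem hEmem, Set.indicator_of_mem hmem]
      · have hEmem : (τ, s) ∉ E := fun h => hmem ⟨h.2, h.1⟩
        show E.indicator _ (τ, s) = _
        rw [Set.indicator_of_notMem hEmem, Set.indicator_of_notMem hmem]
    calc g τ = ∫ s, (Ω ∩ Ioi τ).indicator (fun s => Real.exp (τ - s) • ξ s) s :=
        (integral_indicator (hΩmeas.inter measurableSet_Ioi)).symm
      _ = ∫ s, G (τ, s) := by rw [h1]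
  have hgsm : StronglyMeasurable g := by
    have h2 : g = fun τ => ∫ s, G (τ, s) := funext hg_eq
    rw [h2]; exact hGsm.integral_prod_right'
  set H : ℝ → ℝ → ℝ≥0∞ := fun τ s =>
    if τ < s then ENNReal.ofReal (Real.exp (τ - s)) * ‖ξ s‖₊ else 0 with hH
  have hHmeas : Measurable (Function.uncurry H) := by
    apply Measurable.ite (measurableSet_lt measurable_fst measurable_snd)
    · exact ((Real.continuous_exp.measurable.comp
        (measurable_fst.sub measurable_snd)).ennreal_ofReal).mul
        (hξm.nnnorm.measurable.coe_nnreal_ennreal.comp measurable_snd)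
    · exact measurable_const
  have hgτbound : ∀ τ, (‖g τ‖₊ : ℝ≥0∞) ≤ ∫⁻ s in Ω, H τ s := by
    intro τ
    have e1 : (‖g τ‖₊ : ℝ≥0∞) ≤ ∫⁻ s in Ω ∩ Ioi τ, ‖Real.exp (τ - s) • ξ s‖₊ :=
      enorm_integral_le_lintegral_enorm _
    refine e1.trans_eq ?_
    have e2 : ∫⁻ s in Ω ∩ Ioi τ, (‖Real.exp (τ - s) • ξ s‖₊ : ℝ≥0∞)
        = ∫⁻ s in Ω ∩ Ioi τ, ENNReal.ofReal (Real.exp (τ - s)) * ‖ξ s‖₊ := by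
      refine lintegral_congr fun s => ?_
      rw [nnnorm_smul, ENNReal.coe_mul, ← enorm_eq_nnnorm, Real.enorm_eq_ofReal (Real.exp_pos _).le]
    rw [e2, inter_comm, ← Measure.restrict_restrict measurableSet_Ioi,
      ← lintegral_indicator measurableSet_Ioi]
    refine lintegral_congr fun s => ?_
    simp [hH, Set.indicator_apply, Set.mem_Ioi]
  have hswap : ∫⁻ τ in Ω, ∫⁻ s in Ω, H τ s = ∫⁻ s in Ω, ∫⁻ τ in Ω, H τ s :=
    lintegral_lintegral_swap hHmeas.aemeasurable
  have hinner : ∀ s, ∫⁻ τ in Ω, H τ s ≤ (‖ξ s‖₊ : ℝ≥0∞) := by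
    intro s
    have h1 : ∫⁻ τ in Ω, H τ s ≤ ∫⁻ τ, H τ s :=
      lintegral_mono' Measure.restrict_le_self le_rfl
    refine h1.trans ?_
    have h2 : (fun τ => H τ s)
        = (Iio s).indicator (fun τ => ENNReal.ofReal (Real.exp (τ - s)) * ‖ξ s‖₊) := by
      funext τ; simp [hH, Set.indicator_apply, Set.mem_Iio]
    rw [h2, lintegral_indicator measurableSet_Iio]
    have h3 : ∫⁻ τ in Iio s, ENNReal.ofReal (Real.exp (τ - s)) * ‖ξ s‖₊
        ≤ ∫⁻ τ in Iic s, ENNReal.ofReal (Real.exp (τ - s)) * ‖ξ s‖₊ :=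
      lintegral_mono' (Measure.restrict_mono Iio_subset_Iic_self le_rfl) le_rfl
    refine h3.trans ?_
    rw [lintegral_mul_const' _ _ ENNReal.coe_ne_top]
    have hint : IntegrableOn (fun τ => Real.exp (τ - s)) (Iic s) := by
      simp_rw [Real.exp_sub]
      exact (integrableOn_exp_Iic s).div_const _
    have h4 : ∫⁻ τ in Iic s, ENNReal.ofReal (Real.exp (τ - s)) = 1 := by
      rw [← ofReal_integral_eq_lintegral_ofReal hint
        (Eventually.of_forall fun τ => (Real.exp_pos _).le)]
      have h5 : ∫ τ in Iic s, Real.exp (τ - s) = 1 := by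
        simp_rw [Real.exp_sub]
        rw [integral_div, integral_exp_Iic, div_self (Real.exp_pos s).ne']
      rw [h5, ENNReal.ofReal_one]
    rw [h4, one_mul]
  have hmain : ∫⁻ τ in Ω, (‖g τ‖₊ : ℝ≥0∞) ≤ ENNReal.ofReal (∫ s in Ω, ‖ξ s‖) := by
    calc ∫⁻ τ in Ω, (‖g τ‖₊ : ℝ≥0∞) ≤ ∫⁻ τ in Ω, ∫⁻ s in Ω, H τ s :=
          lintegral_mono hgτbound
      _ = ∫⁻ s in Ω, ∫⁻ τ in Ω, H τ s := hswap
      _ ≤ ∫⁻ s in Ω, (‖ξ s‖₊ : ℝ≥0∞) := lintegral_mono hinner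
      _ = ∫⁻ s in Ω, ENNReal.ofReal ‖ξ s‖ := by simp_rw [ofReal_norm_eq_enorm, enorm_eq_nnnorm]
      _ = ENNReal.ofReal (∫ s in Ω, ‖ξ s‖) :=
          (ofReal_integral_eq_lintegral_ofReal hξnorm_int
            (Eventually.of_forall fun s => norm_nonneg _)).symm
  have hgint : IntegrableOn g Ω :=
    ⟨hgsm.aestronglyMeasurable, hmain.trans_lt ENNReal.ofReal_lt_top⟩
  have hpt : ∀ τ, (∫ s in Ω ∩ Ioi τ, Real.exp (τ - s) • ξs s) = g τ := by
    intro τ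
    refine integral_congr_ae ?_
    have h2 : ξs =ᵐ[volume.restrict (Ω ∩ Ioi τ)] ξ :=
      hξae.filter_mono (ae_mono (Measure.restrict_mono inter_subset_left le_rfl))
    filter_upwards [h2] with s hs
    rw [hs]
  have hfun : (fun τ => ∫ s in Ω ∩ Ioi τ, Real.exp (τ - s) • ξs s) = g := funext hpt
  constructor
  · rw [hfun]; exact hgint
  · have h6 : ‖∫ τ in Ω, g τ‖ ≤ ∫ s in Ω, ‖ξ s‖ := by
      have h5 : ENNReal.ofReal ‖∫ τ in Ω, g τ‖ ≤ ENNReal.ofReal (∫ s in Ω, ‖ξ s‖) := by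
        rw [ofReal_norm_eq_enorm]
        exact (enorm_integral_le_lintegral_enorm _).trans hmain
      exact (ENNReal.ofReal_le_ofReal_iff
        (integral_nonneg fun s => norm_nonneg _)).mp h5
    calc ‖∫ τ in Ω, ∫ s in Ω ∩ Ioi τ, Real.exp (τ - s) • ξs s‖
        = ‖∫ τ in Ω, g τ‖ := by rw [hfun]
      _ ≤ ∫ s in Ω, ‖ξ s‖ := h6
      _ ≤ _ := hCS
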